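/- For all stochastic matrices p and q on a nonempty finite set S, Doeblin's ergodicity coefficient satisfies (1 − α(p·q)) ≤ (1 − α(p))·(1 − α(q)), where p·q denotes the matrix product. -/

import Mathlib

/-- A stochastic matrix on a finite set `S`: nonnegative entries, each row sums to 1. -/
def IsStochastic {S : Type*} [Fintype S] (p : Matrix S S ℝ) : Prop :=
  (∀ i j, 0 ≤ p i j) ∧ ∀ i, ∑ j, p i j = 1

/-- A matrix all of whose rows are identical. -/
def IsConstRow {S : Type*} (E : Matrix S S ℝ) : Prop :=
  ∀ i i' j, E i j = E i' j

/-- Doeblin's ergodicity coefficient `α(p) = Σ_j min_i p(i,j)`. -/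
noncomputable def doeblin {S : Type*} [Fintype S] [Nonempty S] (p : Matrix S S ℝ) : ℝ :=
  ∑ j, Finset.univ.inf' Finset.univ_nonempty fun i => p i j

theorem doeblin_submultiplicative {S : Type*} [Fintype S] [Nonempty S]
    (p q : Matrix S S ℝ) (hp : IsStochastic p) (hq : IsStochastic q) :
    1 - doeblin (p * q) ≤ (1 - doeblin p) * (1 - doeblin q) := by
  set n : S → ℝ := fun k => Finset.univ.inf' Finset.univ_nonempty fun i => p i k with hn
  set m : S → ℝ := fun j => Finset.univ.inf' Finset.univ_nonempty fun i => q i j with hm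
  have hnle : ∀ i k, n k ≤ p i k := fun i k => Finset.inf'_le _ (Finset.mem_univ i)
  have hmle : ∀ i j, m j ≤ q i j := fun i j => Finset.inf'_le _ (Finset.mem_univ i)
  have hn0 : ∀ k, 0 ≤ n k := fun k => Finset.le_inf' _ _ fun i _ => hp.1 i k
  have hdp : doeblin p = ∑ k, n k := rfl
  have hdq : doeblin q = ∑ j, m j := rfl
  have key : doeblin q + doeblin p * (1 - doeblin q) ≤ doeblin (p * q) := by
    have h1 : ∀ j, m j + ∑ k, n k * (q k j - m j) ≤
        Finset.univ.inf' Finset.univ_nonempty fun i => (p * q) i j := by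
      intro j
      apply Finset.le_inf'
      intro i _
      have h2 : (p * q) i j = ∑ k, (p i k * m j + p i k * (q k j - m j)) := by
        rw [Matrix.mul_apply]; congr 1; ext k; ring
      rw [h2, Finset.sum_add_distrib, ← Finset.sum_mul, hp.2 i, one_mul]
      refine add_le_add (le_refl _) (Finset.sum_le_sum fun k _ => ?_)
      exact mul_le_mul_of_nonneg_right (hnle i k) (sub_nonneg.2 (hmle k j))
    have h3 : ∑ j, (m j + ∑ k, n k * (q k j - m j)) ≤ doeblin (p * q) :=
      Finset.sum_le_sum fun j _ => h1 j
    refine le_trans (le_of_eq ?_) h3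
    rw [Finset.sum_add_distrib, Finset.sum_comm]
    have h4 : ∀ k, ∑ j, n k * (q k j - m j) = n k * (1 - doeblin q) := by
      intro k
      rw [← Finset.mul_sum, Finset.sum_sub_distrib, hq.2 k, hdq]
    simp_rw [h4, ← Finset.sum_mul, ← hdp, hdq]
  nlinarith [key]
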